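/- arXiv:1906.10023 — 4 statements merged into one kernel-verified Lean document; each statement's English description precedes it below -/
import Mathlib

section
/- Let m ≥ 1 and let ρ₀, ρ₁, …, ρ_m be positive semidefinite complex k×k matrices, each of trace 1, which are supported on pairwise orthogonal subspaces (i.e. ρ_i · ρ_j = 0 whenever i ≠ j). Let p, q be nonnegative reals with p + q = 1, and set ρ = p·ρ₀ + (q/m)·∑_{l=1}^{m} ρ_l. Then the trace norm of ρ − ρ₀ equals 2q, i.e. ‖ρ − ρ₀‖₁ = 2q. -/
open Matrix
open scoped ComplexOrder

/-- The positive semidefinite square root of a positive semidefinite matrix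
(the definition `Matrix.PosSemidef.sqrt` of the older Mathlib, since removed). -/
noncomputable def Matrix.PosSemidef.sqrt {n 𝕜 : Type*} [Fintype n] [DecidableEq n] [RCLike 𝕜]
    {A : Matrix n n 𝕜} (hA : A.PosSemidef) : Matrix n n 𝕜 :=
  hA.1.eigenvectorUnitary.1 * diagonal ((↑) ∘ (√·) ∘ hA.1.eigenvalues) *
  (star hA.1.eigenvectorUnitary : Matrix n n 𝕜)

/-- The trace norm of a complex square matrix: `‖X‖₁ = tr[(X·Xᴴ)^{1/2}]`
(real part of the trace of the positive semidefinite square root of `X * Xᴴ`). -/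
noncomputable def traceNorm {k : ℕ} (X : Matrix (Fin k) (Fin k) ℂ) : ℝ :=
  ((Matrix.posSemidef_self_mul_conjTranspose X).sqrt.trace).re

lemma posSemidef_real_smul {n : ℕ} {M : Matrix (Fin n) (Fin n) ℂ}
    (hM : M.PosSemidef) {r : ℝ} (hr : 0 ≤ r) : (r • M).PosSemidef := by
  refine ⟨?_, fun x => ?_⟩
  · unfold Matrix.IsHermitian
    rw [Matrix.conjTranspose_smul, star_trivial, hM.1.eq]
  · exact (hM.smul hr).2 x

/-- Lemma 1: a mixture `ρ = p·ρ₀ + (q/m)·∑_{l=1}^m ρ_l` of density matrices supported on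
pairwise orthogonal subspaces satisfies `‖ρ − ρ₀‖₁ = 2q`. -/
theorem traceNorm_mixture_sub_leading {k m : ℕ} (hm : 1 ≤ m)
    (ρ : Fin (m + 1) → Matrix (Fin k) (Fin k) ℂ)
    (hpsd : ∀ i, (ρ i).PosSemidef) (htr : ∀ i, (ρ i).trace = 1)
    (horth : ∀ i j, i ≠ j → ρ i * ρ j = 0)
    (p q : ℝ) (hp : 0 ≤ p) (hq : 0 ≤ q) (hpq : p + q = 1) :
    traceNorm ((p • ρ 0 + (q / m) • ∑ l ∈ Finset.univ.erase 0, ρ l) - ρ 0) = 2 * q := by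
  have hm0 : (m : ℝ) ≠ 0 := Nat.cast_ne_zero.mpr (by omega)
  set S : Matrix (Fin k) (Fin k) ℂ := ∑ l ∈ Finset.univ.erase 0, ρ l with hSdef
  set A : Matrix (Fin k) (Fin k) ℂ := (q / m) • S with hAdef
  set B : Matrix (Fin k) (Fin k) ℂ := q • ρ 0 with hBdef
  -- the matrix in question equals A - B
  have hp' : p = 1 - q := by linarith
  have hX : (p • ρ 0 + (q / m) • S) - ρ 0 = A - B := by
    rw [hp', hAdef, hBdef]; module
  -- orthogonality of S and ρ 0
  have hS0 : S * ρ 0 = 0 := by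
    rw [hSdef, Finset.sum_mul]
    refine Finset.sum_eq_zero fun l hl => horth l 0 (Finset.ne_of_mem_erase hl)
  have h0S : ρ 0 * S = 0 := by
    rw [hSdef, Finset.mul_sum]
    refine Finset.sum_eq_zero fun l hl => horth 0 l (Finset.ne_of_mem_erase hl).symm
  have hAB : A * B = 0 := by
    rw [hAdef, hBdef, smul_mul_assoc, mul_smul_comm, hS0, smul_zero, smul_zero]
  have hBA : B * A = 0 := by
    rw [hAdef, hBdef, smul_mul_assoc, mul_smul_comm, h0S, smul_zero, smul_zero]
  -- positivity
  have hSpsd : S.PosSemidef :=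
    Finset.sum_induction _ _ (fun a b ha hb => ha.add hb) Matrix.PosSemidef.zero
      (fun i _ => hpsd i)
  have hApsd : A.PosSemidef := posSemidef_real_smul hSpsd (by positivity)
  have hBpsd : B.PosSemidef := posSemidef_real_smul (hpsd 0) hq
  have hABpsd : (A + B).PosSemidef := hApsd.add hBpsd
  -- Hermitian-ness of A - B
  have hherm : (A - B)ᴴ = A - B := by
    rw [Matrix.conjTranspose_sub, hApsd.1.eq, hBpsd.1.eq]
  -- square identity
  have hsq : (A + B) ^ 2 = (A - B) * (A - B)ᴴ := by
    rw [hherm, pow_two]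
    rw [add_mul, mul_add, mul_add, sub_mul, mul_sub, mul_sub, hAB, hBA]
    simp
  have key : A + B = (Matrix.posSemidef_self_mul_conjTranspose (A - B)).sqrt :=
    by
      open scoped MatrixOrder in
      have hM := Matrix.posSemidef_self_mul_conjTranspose (A - B)
      have e1 : hM.sqrt = hM.1.cfc Real.sqrt := by
        simp [Matrix.PosSemidef.sqrt, Matrix.IsHermitian.cfc, Unitary.conjStarAlgAut_apply]
      rw [e1, ← hM.1.cfc_eq, ← cfcₙ_eq_cfc, ← CFC.sqrt_eq_real_sqrt _ hM.nonneg,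
        CFC.sqrt_unique (by rw [← pow_two]; exact hsq) hABpsd.nonneg]
  unfold traceNorm
  rw [hX, ← key]
  -- compute the trace
  have htrS : S.trace = (m : ℂ) := by
    rw [hSdef, Matrix.trace_sum]
    rw [Finset.sum_congr rfl fun l _ => htr l, Finset.sum_const,
      Finset.card_erase_of_mem (Finset.mem_univ _), Finset.card_univ, Fintype.card_fin]
    simp
  rw [Matrix.trace_add, hAdef, hBdef, Matrix.trace_smul, Matrix.trace_smul, htrS, htr 0]
  push_cast
  rw [Complex.add_re]
  simp [Complex.real_smul]
  field_simp
  ring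
end

section
/- Let n ≥ 2 and k ≥ 1 be natural numbers, and let c, s be nonnegative real numbers. Consider the complex (n·k)×(n·k) matrix Y = I_n ⊗ (c·I_k) + (J_n − I_n) ⊗ (s·J_k), where I_m denotes the m×m identity matrix, J_m denotes the m×m matrix all of whose entries equal 1, and ⊗ is the Kronecker product; that is, Y is the n×n block matrix with diagonal blocks c·I_k and all off-diagonal blocks s·J_k. Then Y is positive semidefinite if and only if c ≥ s·k. -/
open Matrix
open scoped Kronecker ComplexOrder

/-- The `m × m` all-ones matrix. -/
def allOnes (m : ℕ) : Matrix (Fin m) (Fin m) ℂ := Matrix.of fun _ _ => 1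

lemma my_smul_psd {m : Type*} [Fintype m] (r : ℝ) (hr : 0 ≤ r) {A : Matrix m m ℂ}
    (hA : A.PosSemidef) : ((r : ℂ) • A).PosSemidef := by
  refine posSemidef_iff_dotProduct_mulVec.mpr ⟨?_, ?_⟩
  · unfold Matrix.IsHermitian
    rw [conjTranspose_smul, hA.1]
    simp [Complex.conj_ofReal]
  · intro x
    rw [smul_mulVec, dotProduct_smul, smul_eq_mul]
    exact mul_nonneg (by exact_mod_cast hr) (hA.dotProduct_mulVec_nonneg x)

lemma my_sq_psd {m : Type*} [Fintype m] (r : ℝ) (hr : 0 < r) {A : Matrix m m ℂ}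
    (hH : A.IsHermitian) (hsq : A * A = (r : ℂ) • A) : A.PosSemidef := by
  have h : A = ((((Real.sqrt r)⁻¹ : ℝ) : ℂ) • A)ᴴ * ((((Real.sqrt r)⁻¹ : ℝ) : ℂ) • A) := by
    rw [conjTranspose_smul, hH.eq, smul_mul_smul_comm, hsq, smul_smul]
    rw [show (star ((((Real.sqrt r)⁻¹ : ℝ)) : ℂ) * (((Real.sqrt r)⁻¹ : ℝ) : ℂ) * (r:ℂ)) = 1 by
      rw [Complex.star_def, Complex.conj_ofReal]
      have h1 : ((Real.sqrt r : ℝ) : ℂ) ≠ 0 := by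
        exact_mod_cast (Real.sqrt_ne_zero'.mpr hr)
      push_cast
      field_simp
      exact_mod_cast (Real.sq_sqrt hr.le).symm]
    rw [one_smul]
  rw [h]
  exact posSemidef_conjTranspose_mul_self _

lemma allOnes_mul_self (k : ℕ) : allOnes k * allOnes k = (k : ℂ) • allOnes k := by
  ext i j
  simp [allOnes, mul_apply]

lemma H_herm (k : ℕ) : ((k:ℂ) • (1 : Matrix (Fin k) (Fin k) ℂ) - allOnes k).IsHermitian := by
  unfold Matrix.IsHermitian
  ext i j
  simp [allOnes, conjTranspose_apply, one_apply, apply_ite]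
  split_ifs with h1 <;> simp_all [eq_comm]

lemma H_sq (k : ℕ) : ((k:ℂ) • (1 : Matrix (Fin k) (Fin k) ℂ) - allOnes k) *
    ((k:ℂ) • (1 : Matrix (Fin k) (Fin k) ℂ) - allOnes k)
    = (k:ℂ) • ((k:ℂ) • (1 : Matrix (Fin k) (Fin k) ℂ) - allOnes k) := by
  rw [mul_sub, sub_mul, sub_mul, allOnes_mul_self]
  simp only [smul_mul_assoc, mul_smul_comm, one_mul, mul_one]
  rw [smul_sub]
  abel

lemma G_psd (n k : ℕ) : (Matrix.of fun (_ _ : Fin n × Fin k) => (1:ℂ)).PosSemidef := by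
  have h : (Matrix.of fun (_ _ : Fin n × Fin k) => (1:ℂ))
      = (Matrix.of fun (_ : Fin 1) (_ : Fin n × Fin k) => (1:ℂ))ᴴ
        * (Matrix.of fun (_ : Fin 1) (_ : Fin n × Fin k) => (1:ℂ)) := by
    ext p q
    simp [mul_apply, conjTranspose_apply]
  rw [h]
  exact posSemidef_conjTranspose_mul_self _

lemma kron_herm (n k : ℕ) {H : Matrix (Fin k) (Fin k) ℂ} (hH : H.IsHermitian) :
    ((1 : Matrix (Fin n) (Fin n) ℂ) ⊗ₖ H).IsHermitian := by
  unfold Matrix.IsHermitian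
  ext ⟨i, j⟩ ⟨i', j'⟩
  simp only [conjTranspose_apply, kroneckerMap_apply, star_mul', one_apply, apply_ite,
    star_one, star_zero, hH.apply, eq_comm]

lemma decomp (n k : ℕ) (c s : ℝ) :
    ((1 : Matrix (Fin n) (Fin n) ℂ) ⊗ₖ ((c : ℂ) • (1 : Matrix (Fin k) (Fin k) ℂ))
      + (allOnes n - 1) ⊗ₖ ((s : ℂ) • allOnes k))
    = (((c - s*k : ℝ)) : ℂ) • (1 : Matrix (Fin n × Fin k) (Fin n × Fin k) ℂ)
      + (s : ℂ) • ((1 : Matrix (Fin n) (Fin n) ℂ)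
          ⊗ₖ ((k:ℂ) • (1 : Matrix (Fin k) (Fin k) ℂ) - allOnes k))
      + (s : ℂ) • (Matrix.of fun (_ _ : Fin n × Fin k) => (1:ℂ)) := by
  ext ⟨i, j⟩ ⟨i', j'⟩
  simp only [Matrix.add_apply, kroneckerMap_apply, Matrix.smul_apply, Matrix.sub_apply, one_apply, of_apply,
    allOnes, smul_eq_mul, Prod.mk.injEq, Complex.ofReal_sub, Complex.ofReal_mul,
    Complex.ofReal_natCast]
  by_cases h1 : i = i' <;> by_cases h2 : j = j' <;> simp [h1, h2] <;> ring

/-- The block matrix `Y = I_n ⊗ (c·I_k) + (J_n − I_n) ⊗ (s·J_k)` (diagonal blocks `c·I_k`,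
off-diagonal blocks `s·J_k`, with `c, s ≥ 0`) is positive semidefinite iff `c ≥ s·k`. -/
theorem posSemidef_block_identity_allOnes_iff (n k : ℕ) (hn : 2 ≤ n) (hk : 1 ≤ k)
    (c s : ℝ) (hc : 0 ≤ c) (hs : 0 ≤ s) :
    ((1 : Matrix (Fin n) (Fin n) ℂ) ⊗ₖ ((c : ℂ) • (1 : Matrix (Fin k) (Fin k) ℂ))
      + (allOnes n - 1) ⊗ₖ ((s : ℂ) • allOnes k)).PosSemidef ↔ s * k ≤ c := by
  have hk0 : (0:ℝ) < k := by
    have : (1:ℝ) ≤ k := by exact_mod_cast hk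
    linarith
  rw [decomp n k c s]
  constructor
  · intro h
    -- witness vector
    set i0 : Fin n := ⟨0, by omega⟩ with hi0
    set i1 : Fin n := ⟨1, by omega⟩ with hi1
    have hne : i0 ≠ i1 := by simp [hi0, hi1, Fin.ext_iff]
    set f : Fin n → ℂ := fun i => if i = i0 then 1 else if i = i1 then -1 else 0 with hf
    set x : Fin n × Fin k → ℂ := fun p => f p.1 with hx
    have hfsum : ∑ i, f i = 0 := by
      have hpt : ∀ i : Fin n, f i
          = (if i = i0 then (1:ℂ) else 0) + (if i = i1 then (-1:ℂ) else 0) := by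
        intro i
        simp only [hf]
        split_ifs <;> simp_all
      rw [Finset.sum_congr rfl fun i _ => hpt i]
      simp [Finset.sum_add_distrib]
    have hrow : ∀ j : Fin k,
        ∑ j', ((k:ℂ) • (1 : Matrix (Fin k) (Fin k) ℂ) - allOnes k) j j' = 0 := by
      intro j
      simp [allOnes, Matrix.sub_apply, one_apply, Finset.sum_sub_distrib, Finset.sum_ite_eq]
    have h1 : ((1 : Matrix (Fin n) (Fin n) ℂ)
        ⊗ₖ ((k:ℂ) • (1 : Matrix (Fin k) (Fin k) ℂ) - allOnes k)) *ᵥ x = 0 := by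
      ext ⟨i, j⟩
      simp only [mulVec, dotProduct, Fintype.sum_prod_type, kroneckerMap_apply, Pi.zero_apply]
      have key : ∀ i' : Fin n, ∑ j' : Fin k,
          (1 : Matrix (Fin n) (Fin n) ℂ) i i'
            * ((k:ℂ) • (1 : Matrix (Fin k) (Fin k) ℂ) - allOnes k) j j' * x (i', j')
          = 0 := by
        intro i'
        have hterm : ∀ j' : Fin k,
            (1 : Matrix (Fin n) (Fin n) ℂ) i i'
              * ((k:ℂ) • (1 : Matrix (Fin k) (Fin k) ℂ) - allOnes k) j j' * x (i', j')
            = ((1 : Matrix (Fin n) (Fin n) ℂ) i i' * f i')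
              * ((k:ℂ) • (1 : Matrix (Fin k) (Fin k) ℂ) - allOnes k) j j' := by
          intro j'
          simp only [hx]
          ring
        rw [Finset.sum_congr rfl fun j' _ => hterm j', ← Finset.mul_sum, hrow, mul_zero]
      rw [Finset.sum_congr rfl fun i' _ => key i', Finset.sum_const_zero]
    have h2 : (Matrix.of fun (_ _ : Fin n × Fin k) => (1:ℂ)) *ᵥ x = 0 := by
      ext p
      simp only [mulVec, dotProduct, of_apply, one_mul, Fintype.sum_prod_type, Pi.zero_apply,
        hx, Finset.sum_const, Finset.card_univ, Fintype.card_fin]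
      rw [← Finset.smul_sum, hfsum, smul_zero]
    have hxx : star x ⬝ᵥ x = ((2 * k : ℝ) : ℂ) := by
      have hpt : ∀ i : Fin n, star (f i) * f i
          = (if i = i0 then (1:ℂ) else 0) + (if i = i1 then (1:ℂ) else 0) := by
        intro i
        simp only [hf]
        split_ifs <;> simp_all
      simp only [dotProduct, Pi.star_apply, hx, Fintype.sum_prod_type]
      rw [Finset.sum_congr rfl fun i _ => Finset.sum_congr rfl fun (j : Fin k) _ => hpt i]
      simp only [Finset.sum_const, Finset.card_univ, Fintype.card_fin]
      rw [← Finset.smul_sum]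
      simp [Finset.sum_add_distrib, nsmul_eq_mul]
      push_cast
      ring
    have hQ := h.dotProduct_mulVec_nonneg x
    rw [add_mulVec, add_mulVec, smul_mulVec, smul_mulVec, smul_mulVec,
      h1, h2, smul_zero, add_zero, add_zero, one_mulVec, dotProduct_smul,
      smul_eq_mul, hxx, ← Complex.ofReal_mul] at hQ
    have hQ' : (0:ℝ) ≤ (c - s * k) * (2 * k) := by exact_mod_cast hQ
    nlinarith
  · intro hle
    refine PosSemidef.add (PosSemidef.add ?_ ?_) ?_
    · exact my_smul_psd _ (by linarith) PosSemidef.one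
    · have hsq2 : ((1 : Matrix (Fin n) (Fin n) ℂ)
            ⊗ₖ ((k:ℂ) • (1 : Matrix (Fin k) (Fin k) ℂ) - allOnes k))
          * ((1 : Matrix (Fin n) (Fin n) ℂ)
            ⊗ₖ ((k:ℂ) • (1 : Matrix (Fin k) (Fin k) ℂ) - allOnes k))
          = (k:ℂ) • ((1 : Matrix (Fin n) (Fin n) ℂ)
            ⊗ₖ ((k:ℂ) • (1 : Matrix (Fin k) (Fin k) ℂ) - allOnes k)) := by
        rw [← mul_kronecker_mul, one_mul, H_sq, kronecker_smul]
      exact my_smul_psd _ hs (my_sq_psd k (by exact_mod_cast hk0) (kron_herm n k (H_herm k)) hsq2)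
    · exact my_smul_psd _ hs (G_psd n k)
end

section
/- Let n ≥ 1 and k ≥ 1 be natural numbers and let c, s be real numbers. The characteristic polynomial of the (n·k)×(n·k) real matrix M = I_n ⊗ (c·I_k) + (J_n − I_n) ⊗ (s·J_k) equals (X − (c + (n−1)·s·k)) · (X − (c − s·k))^{n−1} · (X − c)^{n·(k−1)}, where I_m denotes the m×m identity matrix, J_m the m×m all-ones matrix, and ⊗ the Kronecker product. -/
open Matrix Polynomial
open scoped Kronecker

/-- The `m × m` all-ones real matrix. -/
def allOnesR (m : ℕ) : Matrix (Fin m) (Fin m) ℝ := Matrix.of fun _ _ => 1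

def Umat (m : ℕ) [NeZero m] : Matrix (Fin m) (Fin m) ℝ :=
  Matrix.of fun i j => if j = 0 then 1 else (if i = 0 then 1 else 0) - (if i = j then 1 else 0)

noncomputable def Vmat (m : ℕ) [NeZero m] : Matrix (Fin m) (Fin m) ℝ :=
  Matrix.of fun i j => (m : ℝ)⁻¹ - (if i = 0 then 0 else if i = j then 1 else 0)

def Dmat (m : ℕ) [NeZero m] : Matrix (Fin m) (Fin m) ℝ :=
  Matrix.diagonal (fun i => if i = 0 then (m : ℝ) else 0)

theorem Vmat_mul_Umat (m : ℕ) [NeZero m] : Vmat m * Umat m = 1 := by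
  have hm : (m : ℝ) ≠ 0 := Nat.cast_ne_zero.mpr (NeZero.ne m)
  ext i l
  rw [Matrix.mul_apply]
  by_cases hi : i = 0 <;> by_cases hl : l = 0 <;>
    simp [Vmat, Umat, Matrix.one_apply, hi, hl, sub_mul, mul_sub,
      Finset.sum_sub_distrib, Finset.sum_ite_eq, Finset.sum_ite_eq',
      Finset.card_univ, mul_comm, hm, eq_comm]

theorem Umat_mul_Vmat (m : ℕ) [NeZero m] : Umat m * Vmat m = 1 :=
  mul_eq_one_comm.mp (Vmat_mul_Umat m)

theorem allOnes_mul_Umat (m : ℕ) [NeZero m] : allOnesR m * Umat m = Umat m * Dmat m := by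
  ext i l
  rw [Matrix.mul_apply, Dmat, Matrix.mul_diagonal]
  by_cases hl : l = 0 <;>
    simp [allOnesR, Umat, hl, Finset.sum_sub_distrib,
      Finset.sum_ite_eq, Finset.sum_ite_eq', Finset.card_univ, eq_comm, mul_comm]

theorem allOnes_eq (m : ℕ) [NeZero m] : allOnesR m = Umat m * Dmat m * Vmat m := by
  calc allOnesR m = allOnesR m * (Umat m * Vmat m) := by rw [Umat_mul_Vmat, Matrix.mul_one]
    _ = (allOnesR m * Umat m) * Vmat m := by rw [Matrix.mul_assoc]
    _ = Umat m * Dmat m * Vmat m := by rw [allOnes_mul_Umat]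

theorem charpoly_conj_aux {m : Type*} [Fintype m] [DecidableEq m] (U V M : Matrix m m ℝ)
    (h : U * V = 1) : (U * M * V).charpoly = M.charpoly := by
  have hmap : (U.map C) * (V.map C) = 1 := by
    rw [← Matrix.map_mul, h, Matrix.map_one _ (map_zero C) (map_one C)]
  have key : charmatrix (U * M * V) = (U.map C) * charmatrix M * (V.map C) := by
    unfold charmatrix
    rw [Matrix.mul_sub, Matrix.sub_mul]
    congr 1
    · rw [(Matrix.scalar_commute (X : ℝ[X]) (Commute.all X) (U.map C)).symm.eq,
        Matrix.mul_assoc, hmap, Matrix.mul_one]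
    · show C.mapMatrix (U * M * V) = _
      simp only [RingHom.mapMatrix_apply, Matrix.map_mul, Matrix.mul_assoc]
  rw [Matrix.charpoly, Matrix.charpoly, key, Matrix.det_mul, Matrix.det_mul]
  have h2 : (U.map C).det * (V.map C).det = 1 := by
    rw [← Matrix.det_mul, hmap, Matrix.det_one]
  calc (U.map C).det * (charmatrix M).det * (V.map C).det
      = (U.map C).det * (V.map C).det * (charmatrix M).det := by ring
    _ = (charmatrix M).det := by rw [h2, one_mul]

theorem charpoly_diagonal_aux {m : Type*} [Fintype m] [DecidableEq m] (d : m → ℝ) :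
    (Matrix.diagonal d).charpoly = ∏ i, (X - C (d i)) := by
  have h : charmatrix (Matrix.diagonal d) = Matrix.diagonal (fun i => X - C (d i)) := by
    ext i j
    by_cases hij : i = j
    · subst hij; simp [charmatrix_apply_eq]
    · simp [charmatrix_apply_ne _ _ _ hij, Matrix.diagonal_apply_ne _ hij]
  rw [Matrix.charpoly, h, Matrix.det_diagonal]

theorem prod_ite_zero_aux (m : ℕ) [NeZero m] (a b : ℝ[X]) :
    (∏ j : Fin m, (if j = 0 then a else b)) = a * b ^ (m - 1) := by
  rw [← Finset.mul_prod_erase Finset.univ _ (Finset.mem_univ (0 : Fin m)), if_pos rfl]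
  congr 1
  rw [Finset.prod_eq_pow_card (fun j hj => if_neg (Finset.ne_of_mem_erase hj)),
    Finset.card_erase_of_mem (Finset.mem_univ _), Finset.card_univ, Fintype.card_fin]

/-- The characteristic polynomial of `M = I_n ⊗ (c·I_k) + (J_n − I_n) ⊗ (s·J_k)` equals
`(X − (c + (n−1)·s·k)) · (X − (c − s·k))^{n−1} · (X − c)^{n·(k−1)}`. -/
theorem charpoly_block_identity_allOnes (n k : ℕ) (hn : 1 ≤ n) (hk : 1 ≤ k)
    (c s : ℝ) :
    ((1 : Matrix (Fin n) (Fin n) ℝ) ⊗ₖ (c • (1 : Matrix (Fin k) (Fin k) ℝ))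
      + (allOnesR n - 1) ⊗ₖ (s • allOnesR k)).charpoly
    = (X - C (c + ((n : ℝ) - 1) * s * k)) * (X - C (c - s * k)) ^ (n - 1)
        * (X - C c) ^ (n * (k - 1)) := by
  have : NeZero n := ⟨by omega⟩
  have : NeZero k := ⟨by omega⟩
  set d : Fin n × Fin k → ℝ :=
    fun p => c + ((if p.1 = 0 then (n : ℝ) else 0) - 1) * (s * (if p.2 = 0 then (k : ℝ) else 0))
    with hd
  have hN : (1 : Matrix (Fin n) (Fin n) ℝ) ⊗ₖ (c • (1 : Matrix (Fin k) (Fin k) ℝ))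
      + (Dmat n - 1) ⊗ₖ (s • Dmat k) = Matrix.diagonal d := by
    have g1 : (1 : Matrix (Fin n) (Fin n) ℝ) = Matrix.diagonal (fun _ => (1:ℝ)) :=
      Matrix.diagonal_one.symm
    have g2 : c • (1 : Matrix (Fin k) (Fin k) ℝ) = Matrix.diagonal (fun _ => c) := by
      ext i j; by_cases h : i = j <;> simp [h, Matrix.diagonal_apply, Matrix.one_apply]
    have g3 : Dmat n - (1 : Matrix (Fin n) (Fin n) ℝ)
        = Matrix.diagonal (fun i => (if i = 0 then (n : ℝ) else 0) - 1) := by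
      rw [Dmat, ← Matrix.diagonal_one, Matrix.diagonal_sub]
    have g4 : s • Dmat k = Matrix.diagonal (fun j => s * (if j = 0 then (k : ℝ) else 0)) := by
      ext i j; by_cases h : i = j <;> simp [h, Dmat, Matrix.diagonal_apply]
    rw [g3, g4, g2, g1, Matrix.diagonal_kronecker_diagonal,
      Matrix.diagonal_kronecker_diagonal, Matrix.diagonal_add]
    funext p
    simp [hd]
  have f1 : Umat n * 1 * Vmat n = 1 := by rw [Matrix.mul_one, Umat_mul_Vmat]
  have f2 : Umat k * (c • (1 : Matrix (Fin k) (Fin k) ℝ)) * Vmat k = c • 1 := by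
    rw [Matrix.mul_smul, Matrix.mul_one, Matrix.smul_mul, Umat_mul_Vmat]
  have f3 : Umat n * (Dmat n - 1) * Vmat n = allOnesR n - 1 := by
    rw [Matrix.mul_sub, Matrix.sub_mul, Matrix.mul_one, Umat_mul_Vmat, ← allOnes_eq]
  have f4 : Umat k * (s • Dmat k) * Vmat k = s • allOnesR k := by
    rw [Matrix.mul_smul, Matrix.smul_mul, ← allOnes_eq]
  have hM : (Umat n ⊗ₖ Umat k) * Matrix.diagonal d * (Vmat n ⊗ₖ Vmat k)
      = (1 : Matrix (Fin n) (Fin n) ℝ) ⊗ₖ (c • (1 : Matrix (Fin k) (Fin k) ℝ))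
      + (allOnesR n - 1) ⊗ₖ (s • allOnesR k) := by
    rw [← hN, Matrix.mul_add, Matrix.add_mul, ← Matrix.mul_kronecker_mul,
      ← Matrix.mul_kronecker_mul, ← Matrix.mul_kronecker_mul, ← Matrix.mul_kronecker_mul,
      f1, f2, f3, f4]
  rw [← hM, charpoly_conj_aux _ _ _ (by
      rw [← Matrix.mul_kronecker_mul, Umat_mul_Vmat, Umat_mul_Vmat,
        Matrix.one_kronecker_one]),
    charpoly_diagonal_aux, Fintype.prod_prod_type]
  have inner : ∀ i : Fin n, (∏ j : Fin k, (X - C (d (i, j))))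
      = (X - C (c + ((if i = 0 then (n : ℝ) else 0) - 1) * (s * k))) * (X - C c) ^ (k - 1) := by
    intro i
    rw [← prod_ite_zero_aux k]
    refine Finset.prod_congr rfl fun j _ => ?_
    by_cases hj : j = 0 <;> simp [hd, hj]
  rw [Finset.prod_congr rfl (fun i _ => inner i), Finset.prod_mul_distrib,
    Finset.prod_const, Finset.card_univ, Fintype.card_fin, ← pow_mul]
  have outer : (∏ i : Fin n, (X - C (c + ((if i = 0 then (n : ℝ) else 0) - 1) * (s * k))))
      = (X - C (c + ((n : ℝ) - 1) * s * k)) * (X - C (c - s * k)) ^ (n - 1) := by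
    rw [← prod_ite_zero_aux n]
    refine Finset.prod_congr rfl fun i _ => ?_
    by_cases hi : i = 0 <;> simp [hi] <;> ring_nf
  rw [outer, mul_comm (k-1) n]
end

section
/- Let D ≥ 1, let φ = (1/√D)·∑_{i=1}^{D} e_i ⊗ e_i ∈ ℂ^D ⊗ ℂ^D be the maximally entangled unit vector, and let P = φ·φᴴ be the corresponding density matrix. Then for every separable state σ on ℂ^D ⊗ ℂ^D (an element of the convex hull over ℝ of Kronecker products σ₁ ⊗ σ₂ of two D×D density matrices), the trace distance satisfies (1/2)·‖P − σ‖₁ ≥ 1 − 1/D. -/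
open Matrix
open scoped Kronecker ComplexOrder

/-- The trace norm of a complex square matrix on an index type `ι`:
`‖X‖₁ = tr[(X·Xᴴ)^{1/2}]`. -/
noncomputable def traceNorm' {ι : Type*} [Fintype ι] [DecidableEq ι]
    (X : Matrix ι ι ℂ) : ℝ :=
  (((Matrix.posSemidef_self_mul_conjTranspose X).1.eigenvectorUnitary.1 *
      diagonal (((↑) : ℝ → ℂ) ∘ (Real.sqrt ·) ∘ (Matrix.posSemidef_self_mul_conjTranspose X).1.eigenvalues) *
      (star (Matrix.posSemidef_self_mul_conjTranspose X).1.eigenvectorUnitary : Matrix ι ι ℂ)).trace).re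

/-- A density matrix: positive semidefinite with trace 1. -/
def IsDensityMatrix {m : Type*} [Fintype m] (ρ : Matrix m m ℂ) : Prop :=
  ρ.PosSemidef ∧ ρ.trace = 1

/-- A state on `ℂ^m ⊗ ℂ^k` is separable if it lies in the real convex hull of Kronecker
products of density matrices. -/
def IsSeparableState {m k : ℕ} (σ : Matrix (Fin m × Fin k) (Fin m × Fin k) ℂ) : Prop :=
  σ ∈ convexHull ℝ {M | ∃ (σ₁ : Matrix (Fin m) (Fin m) ℂ) (σ₂ : Matrix (Fin k) (Fin k) ℂ),
      IsDensityMatrix σ₁ ∧ IsDensityMatrix σ₂ ∧ M = σ₁ ⊗ₖ σ₂}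

/-- The maximally entangled unit vector `φ = (1/√D)·∑ᵢ eᵢ ⊗ eᵢ` in `ℂ^D ⊗ ℂ^D`. -/
noncomputable def maxEntangledVec (D : ℕ) : Fin D × Fin D → ℂ :=
  fun p => if p.1 = p.2 then (1 / Real.sqrt D : ℝ) else 0

section Aux

variable {ι : Type*} [Fintype ι] [DecidableEq ι]

lemma trace_conj_unitary (U : Matrix.unitaryGroup ι ℂ) (M : Matrix ι ι ℂ) :
    ((U : Matrix ι ι ℂ) * M * star (U : Matrix ι ι ℂ)).trace = M.trace := by
  rw [Matrix.trace_mul_cycle, Unitary.coe_star_mul_self, Matrix.one_mul]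

lemma conj_unitary_mul (U : Matrix.unitaryGroup ι ℂ) (d e : ι → ℂ) :
    ((U : Matrix ι ι ℂ) * diagonal d * star (U : Matrix ι ι ℂ)) *
      ((U : Matrix ι ι ℂ) * diagonal e * star (U : Matrix ι ι ℂ)) =
    (U : Matrix ι ι ℂ) * diagonal (d * e) * star (U : Matrix ι ι ℂ) := by
  have h : (star (U : Matrix ι ι ℂ)) * ((U : Matrix ι ι ℂ) * diagonal e * star (U : Matrix ι ι ℂ))
      = diagonal e * star (U : Matrix ι ι ℂ) := by
    rw [← Matrix.mul_assoc, ← Matrix.mul_assoc, Unitary.coe_star_mul_self, Matrix.one_mul]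
  rw [Matrix.mul_assoc ((U : Matrix ι ι ℂ) * diagonal d), h, ← Matrix.mul_assoc,
    Matrix.mul_assoc (U : Matrix ι ι ℂ), Matrix.diagonal_mul_diagonal, Matrix.mul_assoc]
  rw [Matrix.mul_assoc]
  rfl

open scoped MatrixOrder in
lemma traceNorm'_hermitian {X : Matrix ι ι ℂ} (hX : X.IsHermitian) :
    traceNorm' X = ∑ i, |hX.eigenvalues i| := by
  set U := hX.eigenvectorUnitary with hU
  set Y : Matrix ι ι ℂ := (U : Matrix ι ι ℂ) *
    diagonal (fun i => ((|hX.eigenvalues i| : ℝ) : ℂ)) * star (U : Matrix ι ι ℂ) with hY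
  have hYpsd : Y.PosSemidef := by
    apply Matrix.PosSemidef.mul_mul_conjTranspose_same ?_ (U : Matrix ι ι ℂ)
    · rw [Matrix.posSemidef_diagonal_iff]
      intro i
      exact Complex.zero_le_real.mpr (abs_nonneg _)
  have hYsq : Y ^ 2 = X * Xᴴ := by
    have hXX : X * Xᴴ = X * X := by rw [hX.eq]
    rw [hXX]
    conv_rhs => rw [hX.spectral_theorem, Unitary.conjStarAlgAut_apply]
    rw [hY, pow_two, conj_unitary_mul, conj_unitary_mul]
    congr 2
    ext i j
    rcases eq_or_ne i j with rfl | hij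
    · simp [← Complex.ofReal_mul, abs_mul_abs_self]
    · simp [Matrix.diagonal_apply_ne _ hij]
  have hM := Matrix.posSemidef_self_mul_conjTranspose X
  have hsq : ((hM.1.eigenvectorUnitary.1 *
      diagonal (((↑) : ℝ → ℂ) ∘ (Real.sqrt ·) ∘ hM.1.eigenvalues) *
      (star hM.1.eigenvectorUnitary : Matrix ι ι ℂ))) = Y := by
    have e1 : ((hM.1.eigenvectorUnitary.1 *
        diagonal (((↑) : ℝ → ℂ) ∘ (Real.sqrt ·) ∘ hM.1.eigenvalues) *
        (star hM.1.eigenvectorUnitary : Matrix ι ι ℂ))) = hM.1.cfc Real.sqrt := by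
      rw [Matrix.IsHermitian.cfc, Unitary.conjStarAlgAut_apply]; rfl
    rw [e1, ← hM.1.cfc_eq, ← cfcₙ_eq_cfc, ← CFC.sqrt_eq_real_sqrt _ hM.nonneg]
    exact CFC.sqrt_unique (by rw [← pow_two]; exact hYsq) hYpsd.nonneg
  rw [traceNorm', hsq, hY, trace_conj_unitary, Matrix.trace_diagonal]
  simp

lemma trace_eq_sum_eigenvalues {X : Matrix ι ι ℂ} (hX : X.IsHermitian) :
    X.trace = ∑ i, (hX.eigenvalues i : ℂ) := by
  conv_lhs => rw [hX.spectral_theorem, Unitary.conjStarAlgAut_apply]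
  rw [trace_conj_unitary, Matrix.trace_diagonal]
  simp

/-- Key bound: for Hermitian `X` and a unit vector `φ`,
`re⟨φ, Xφ⟩ ≤ (‖X‖₁ + tr X)/2`. -/
lemma herm_quadform_le {X : Matrix ι ι ℂ} (hX : X.IsHermitian) (φ : ι → ℂ)
    (hφ : star φ ⬝ᵥ φ = 1) :
    (star φ ⬝ᵥ (X *ᵥ φ)).re ≤ (traceNorm' X + X.trace.re) / 2 := by
  set U := hX.eigenvectorUnitary with hU
  set ψ : ι → ℂ := star (U : Matrix ι ι ℂ) *ᵥ φ with hψ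
  have hsψ : star ψ = star φ ᵥ* (U : Matrix ι ι ℂ) := by
    rw [hψ, star_mulVec]
    simp [Matrix.star_eq_conjTranspose]
  have key : star φ ⬝ᵥ (X *ᵥ φ) = ∑ i, (hX.eigenvalues i : ℂ) * (ψ i * star (ψ i)) := by
    conv_lhs => rw [hX.spectral_theorem, Unitary.conjStarAlgAut_apply]
    rw [← Matrix.mulVec_mulVec, ← Matrix.mulVec_mulVec, Matrix.dotProduct_mulVec (star φ), ← hsψ]
    simp only [dotProduct, Matrix.mulVec_diagonal, Pi.star_apply]
    congr 1; ext i
    rw [← hψ]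
    simp only [Function.comp_apply, RCLike.ofReal_alg, Complex.coe_algebraMap, Complex.real_smul]
    ring
  have hnorm : ∑ i, Complex.normSq (ψ i) = 1 := by
    have h1 : star ψ ⬝ᵥ ψ = 1 := by
      rw [hsψ, hψ, ← Matrix.dotProduct_mulVec, Matrix.mulVec_mulVec,
        Matrix.mem_unitaryGroup_iff.mp U.2, Matrix.one_mulVec, hφ]
    have := congrArg Complex.re h1
    rw [dotProduct, Complex.re_sum, Complex.one_re] at this
    rw [← this]
    congr 1; ext i
    simp [Complex.normSq_apply, Complex.mul_re]
  have hre : (star φ ⬝ᵥ (X *ᵥ φ)).re = ∑ i, hX.eigenvalues i * Complex.normSq (ψ i) := by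
    rw [key, Complex.re_sum]
    congr 1; ext i
    rw [show star (ψ i) = (starRingEnd ℂ) (ψ i) from rfl, Complex.mul_conj,
      ← Complex.ofReal_mul, Complex.ofReal_re]
  have hn1 : ∀ i, Complex.normSq (ψ i) ≤ 1 := by
    intro i
    rw [← hnorm]
    exact Finset.single_le_sum (fun j _ => Complex.normSq_nonneg (ψ j)) (Finset.mem_univ i)
  calc (star φ ⬝ᵥ (X *ᵥ φ)).re = ∑ i, hX.eigenvalues i * Complex.normSq (ψ i) := hre
    _ ≤ ∑ i, max (hX.eigenvalues i) 0 := by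
        apply Finset.sum_le_sum
        intro i _
        calc hX.eigenvalues i * Complex.normSq (ψ i)
            ≤ max (hX.eigenvalues i) 0 * Complex.normSq (ψ i) :=
              mul_le_mul_of_nonneg_right (le_max_left _ _) (Complex.normSq_nonneg _)
          _ ≤ max (hX.eigenvalues i) 0 * 1 :=
              mul_le_mul_of_nonneg_left (hn1 i) (le_max_right _ _)
          _ = max (hX.eigenvalues i) 0 := mul_one _
    _ = (∑ i, |hX.eigenvalues i| + ∑ i, hX.eigenvalues i) / 2 := by
        rw [← Finset.sum_add_distrib, Finset.sum_div]
        congr 1; ext i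
        rcases le_total (hX.eigenvalues i) 0 with h | h
        · rw [max_eq_right h, abs_of_nonpos h]; ring
        · rw [max_eq_left h, abs_of_nonneg h]; ring
    _ = (traceNorm' X + X.trace.re) / 2 := by
        rw [traceNorm'_hermitian hX, trace_eq_sum_eigenvalues hX, Complex.re_sum]
        simp

lemma psd_diag_re_nonneg {B : Matrix ι ι ℂ} (hB : B.PosSemidef) (i : ι) : 0 ≤ (B i i).re := by
  have := hB.re_dotProduct_nonneg (Pi.single i 1)
  simpa [dotProduct, Pi.single_apply, Matrix.mulVec, Finset.sum_ite_eq,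
    Finset.sum_ite_eq'] using this

lemma psd_diag_re_le_trace {B : Matrix ι ι ℂ} (hB : B.PosSemidef) (i : ι) :
    (B i i).re ≤ B.trace.re := by
  rw [Matrix.trace, Complex.re_sum]
  exact Finset.single_le_sum (fun j _ => psd_diag_re_nonneg hB j) (Finset.mem_univ i)

lemma trace_conj_mul (U : Matrix.unitaryGroup ι ℂ) (D M : Matrix ι ι ℂ) :
    ((U : Matrix ι ι ℂ) * D * star (U : Matrix ι ι ℂ) * M).trace
      = (D * (star (U : Matrix ι ι ℂ) * M * (U : Matrix ι ι ℂ))).trace := by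
  rw [Matrix.mul_assoc ((U : Matrix ι ι ℂ) * D), Matrix.trace_mul_comm, ← Matrix.mul_assoc,
    Matrix.trace_mul_comm]

lemma trace_mul_psd_le {A B : Matrix ι ι ℂ} (hA : A.PosSemidef) (hB : B.PosSemidef) :
    (A * B).trace.re ≤ A.trace.re * B.trace.re := by
  set U := hA.1.eigenvectorUnitary with hU
  set B' : Matrix ι ι ℂ := star (U : Matrix ι ι ℂ) * B * (U : Matrix ι ι ℂ) with hB'
  have hB'psd : B'.PosSemidef := by
    have := hB.conjTranspose_mul_mul_same (U : Matrix ι ι ℂ)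
    rwa [← Matrix.star_eq_conjTranspose] at this
  have htrB' : B'.trace = B.trace := by
    rw [hB', Matrix.trace_mul_cycle, Matrix.mem_unitaryGroup_iff.mp U.2, Matrix.one_mul]
  have key : (A * B).trace = ∑ i, (hA.1.eigenvalues i : ℂ) * B' i i := by
    conv_lhs => rw [hA.1.spectral_theorem, Unitary.conjStarAlgAut_apply]
    rw [trace_conj_mul U _ B, ← hB']
    rw [Matrix.trace]
    congr 1; ext i
    rw [Matrix.diag_apply, Matrix.mul_apply]
    simp [Matrix.diagonal_apply, Finset.sum_ite_eq]
  rw [key, Complex.re_sum]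
  have htrA : A.trace.re = ∑ i, hA.1.eigenvalues i := by
    rw [trace_eq_sum_eigenvalues hA.1, Complex.re_sum]; simp
  calc ∑ i, ((hA.1.eigenvalues i : ℂ) * B' i i).re
      = ∑ i, hA.1.eigenvalues i * (B' i i).re := by
        congr 1; ext i
        simp [Complex.mul_re]
    _ ≤ ∑ i, hA.1.eigenvalues i * B.trace.re := by
        apply Finset.sum_le_sum
        intro i _
        apply mul_le_mul_of_nonneg_left _ (hA.eigenvalues_nonneg i)
        rw [← htrB']
        exact psd_diag_re_le_trace hB'psd i
    _ = A.trace.re * B.trace.re := by rw [← Finset.sum_mul, ← htrA]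

open scoped MatrixOrder in
lemma trace_mul_psd_nonneg {A B : Matrix ι ι ℂ}
    (hA : A.PosSemidef) (hB : B.PosSemidef) : 0 ≤ (A * B).trace.re := by
  have hSS : CFC.sqrt A * CFC.sqrt A = A := CFC.sqrt_mul_sqrt_self A hA.nonneg
  have h1 : (A * B).trace = (CFC.sqrt A * B * CFC.sqrt A).trace := by
    conv_lhs => rw [← hSS]
    rw [Matrix.mul_assoc, Matrix.trace_mul_comm, Matrix.mul_assoc]
  have hpsd : (CFC.sqrt A * B * CFC.sqrt A).PosSemidef := by
    have := hB.conjTranspose_mul_mul_same (CFC.sqrt A)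
    rwa [(CFC.sqrt_nonneg A).posSemidef.1.eq] at this
  rw [h1, Matrix.trace, Complex.re_sum]
  exact Finset.sum_nonneg fun i _ => psd_diag_re_nonneg hpsd i

end Aux

section Phi
variable (D : ℕ) (hD : 1 ≤ D)

include hD in
lemma maxEnt_conj_mul (i j : Fin D) :
    (starRingEnd ℂ) (maxEntangledVec D (i, i)) * maxEntangledVec D (j, j) = ((1 / D : ℝ) : ℂ) := by
  have h1 : (1:ℝ) ≤ D := by exact_mod_cast hD
  have hD0 : (0:ℝ) < D := lt_of_lt_of_le one_pos h1
  have hv : ∀ k : Fin D, maxEntangledVec D (k, k) = ((1 / Real.sqrt D : ℝ) : ℂ) := by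
    intro k; simp [maxEntangledVec]
  rw [hv, hv, Complex.conj_ofReal, ← Complex.ofReal_mul]
  congr 1
  rw [div_mul_div_comm, one_mul, Real.mul_self_sqrt hD0.le]

include hD in
lemma maxEnt_norm : star (maxEntangledVec D) ⬝ᵥ (maxEntangledVec D) = 1 := by
  have h1 : (1:ℝ) ≤ D := by exact_mod_cast hD
  have hD0 : (0:ℝ) < D := lt_of_lt_of_le one_pos h1
  rw [dotProduct]
  rw [Fintype.sum_prod_type]
  have : ∀ i j : Fin D, star (maxEntangledVec D) (i, j) * maxEntangledVec D (i, j)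
      = if i = j then ((1 / D : ℝ) : ℂ) else 0 := by
    intro i j
    rcases eq_or_ne i j with rfl | h
    · rw [if_pos rfl]; exact maxEnt_conj_mul D hD i i
    · simp [maxEntangledVec, h]
  calc ∑ i, ∑ j, star (maxEntangledVec D) (i, j) * maxEntangledVec D (i, j)
      = ∑ i : Fin D, ∑ j : Fin D, if i = j then ((1 / D : ℝ) : ℂ) else 0 := by
        exact Finset.sum_congr rfl fun i _ => Finset.sum_congr rfl fun j _ => this i j
    _ = ∑ _i : Fin D, ((1 / D : ℝ) : ℂ) := by
        exact Finset.sum_congr rfl fun i _ => by simp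
  rw [Finset.sum_const, Finset.card_univ, Fintype.card_fin, nsmul_eq_mul]
  rw [← Complex.ofReal_natCast, ← Complex.ofReal_mul, mul_one_div, div_self hD0.ne']
  norm_num

include hD in
lemma P_trace : (Matrix.vecMulVec (maxEntangledVec D) (star (maxEntangledVec D))).trace = 1 := by
  rw [Matrix.trace]
  have : ∀ p : Fin D × Fin D,
      (Matrix.vecMulVec (maxEntangledVec D) (star (maxEntangledVec D))).diag p
        = star (maxEntangledVec D) p * (maxEntangledVec D) p := by
    intro p
    rw [Matrix.diag_apply, Matrix.vecMulVec_apply]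
    ring
  simp only [this]
  exact maxEnt_norm D hD

lemma P_herm : (Matrix.vecMulVec (maxEntangledVec D) (star (maxEntangledVec D))).IsHermitian := by
  ext ⟨i, j⟩
  rw [Matrix.conjTranspose_apply, Matrix.vecMulVec_apply, Matrix.vecMulVec_apply]
  simp only [Pi.star_apply]
  rw [star_mul']
  ring_nf
  rw [star_star]

include hD in
lemma P_quadform : star (maxEntangledVec D) ⬝ᵥ
    ((Matrix.vecMulVec (maxEntangledVec D) (star (maxEntangledVec D))) *ᵥ (maxEntangledVec D))
      = 1 := by
  have hmv : (Matrix.vecMulVec (maxEntangledVec D) (star (maxEntangledVec D)))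
      *ᵥ (maxEntangledVec D) = maxEntangledVec D := by
    ext x
    rw [Matrix.mulVec, dotProduct]
    simp only [Matrix.vecMulVec_apply]
    rw [show ∑ y, maxEntangledVec D x * star (maxEntangledVec D) y * maxEntangledVec D y
        = maxEntangledVec D x * (star (maxEntangledVec D) ⬝ᵥ (maxEntangledVec D)) by
      rw [dotProduct, Finset.mul_sum]; exact Finset.sum_congr rfl fun y _ => by ring]
    rw [maxEnt_norm D hD, mul_one]
  rw [hmv, maxEnt_norm D hD]

include hD in
lemma gen_quadform {σ₁ σ₂ : Matrix (Fin D) (Fin D) ℂ}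
    (h₁ : IsDensityMatrix σ₁) (h₂ : IsDensityMatrix σ₂) :
    (star (maxEntangledVec D) ⬝ᵥ ((σ₁ ⊗ₖ σ₂) *ᵥ (maxEntangledVec D))).re ≤ 1 / D := by
  have hD0 : (0:ℝ) < D := by
    have : (1:ℝ) ≤ D := by exact_mod_cast hD
    linarith
  have key : star (maxEntangledVec D) ⬝ᵥ ((σ₁ ⊗ₖ σ₂) *ᵥ (maxEntangledVec D))
      = ((1 / D : ℝ) : ℂ) * (σ₁ * σ₂ᵀ).trace := by
    rw [dotProduct]
    have expand : ∀ p : Fin D × Fin D,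
        star (maxEntangledVec D) p * ((σ₁ ⊗ₖ σ₂) *ᵥ (maxEntangledVec D)) p
        = ∑ q : Fin D × Fin D,
            star (maxEntangledVec D) p * (σ₁ ⊗ₖ σ₂) p q * maxEntangledVec D q := by
      intro p
      rw [Matrix.mulVec, dotProduct, Finset.mul_sum]
      exact Finset.sum_congr rfl fun q _ => by ring
    simp only [expand]
    rw [show ((1 / D : ℝ) : ℂ) * (σ₁ * σ₂ᵀ).trace
        = ∑ i : Fin D, ∑ j : Fin D, ((1 / D : ℝ) : ℂ) * (σ₁ i j * σ₂ i j) by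
      rw [Matrix.trace, Finset.mul_sum]
      refine Finset.sum_congr rfl fun i _ => ?_
      rw [Matrix.diag_apply, Matrix.mul_apply, Finset.mul_sum]
      exact Finset.sum_congr rfl fun j _ => by rw [Matrix.transpose_apply]]
    have hφ0 : ∀ p : Fin D × Fin D, p.1 ≠ p.2 → maxEntangledVec D p = 0 := by
      intro p hp; simp [maxEntangledVec, hp]
    have hsφ0 : ∀ p : Fin D × Fin D, p.1 ≠ p.2 → star (maxEntangledVec D) p = 0 := by
      intro p hp; simp only [Pi.star_apply, hφ0 p hp, star_zero]
    rw [Fintype.sum_prod_type]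
    refine Finset.sum_congr rfl fun i _ => ?_
    rw [Finset.sum_eq_single i ?_ ?_]
    rotate_left
    · intro i' _ h
      refine Finset.sum_eq_zero fun q _ => ?_
      rw [hsφ0 (i, i') (by simpa using h.symm), zero_mul, zero_mul]
    · intro h; exact absurd (Finset.mem_univ i) h
    rw [Fintype.sum_prod_type]
    refine Finset.sum_congr rfl fun j _ => ?_
    rw [Finset.sum_eq_single j ?_ ?_]
    rotate_left
    · intro j' _ h
      rw [hφ0 (j, j') (by simpa using h.symm), mul_zero]
    · intro h; exact absurd (Finset.mem_univ j) h
    rw [Matrix.kronecker_apply]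
    rw [show star (maxEntangledVec D) (i, i)
        = (starRingEnd ℂ) (maxEntangledVec D (i, i)) from rfl]
    calc (starRingEnd ℂ) (maxEntangledVec D (i, i)) * (σ₁ i j * σ₂ i j)
          * maxEntangledVec D (j, j)
        = ((starRingEnd ℂ) (maxEntangledVec D (i, i)) * maxEntangledVec D (j, j))
            * (σ₁ i j * σ₂ i j) := by ring
      _ = ((1 / D : ℝ) : ℂ) * (σ₁ i j * σ₂ i j) := by
          rw [maxEnt_conj_mul D hD i j]
  rw [key]
  have htr : (σ₁ * σ₂ᵀ).trace.re ≤ 1 := by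
    have := trace_mul_psd_le h₁.1 (h₂.1.transpose)
    rw [Matrix.trace_transpose, h₁.2, h₂.2] at this
    simpa using this
  have htr0 : 0 ≤ (σ₁ * σ₂ᵀ).trace.re := trace_mul_psd_nonneg h₁.1 h₂.1.transpose
  rw [show (((1 / D : ℝ) : ℂ) * (σ₁ * σ₂ᵀ).trace).re = (1 / D : ℝ) * (σ₁ * σ₂ᵀ).trace.re by
    simp [Complex.mul_re]]
  calc (1 / D : ℝ) * (σ₁ * σ₂ᵀ).trace.re ≤ (1 / D : ℝ) * 1 :=
        mul_le_mul_of_nonneg_left htr (by positivity)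
    _ = 1 / D := mul_one _

include hD in
lemma sep_mem (σ : Matrix (Fin D × Fin D) (Fin D × Fin D) ℂ)
    (hσ : IsSeparableState σ) :
    σ.trace = 1 ∧ σ.IsHermitian ∧
      (star (maxEntangledVec D) ⬝ᵥ (σ *ᵥ (maxEntangledVec D))).re ≤ 1 / D := by
  set S : Set (Matrix (Fin D × Fin D) (Fin D × Fin D) ℂ) :=
    {M | M.trace = 1 ∧ M.IsHermitian ∧
      (star (maxEntangledVec D) ⬝ᵥ (M *ᵥ (maxEntangledVec D))).re ≤ 1 / D} with hS
  have hconv : Convex ℝ S := by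
    intro x hx y hy a b ha hb hab
    obtain ⟨hx1, hx2, hx3⟩ := hx
    obtain ⟨hy1, hy2, hy3⟩ := hy
    refine ⟨?_, ?_, ?_⟩
    · rw [Matrix.trace_add, Matrix.trace_smul, Matrix.trace_smul, hx1, hy1,
        Complex.real_smul, Complex.real_smul, mul_one, mul_one, ← Complex.ofReal_add, hab,
        Complex.ofReal_one]
    · rw [Matrix.IsHermitian, Matrix.conjTranspose_add, Matrix.conjTranspose_smul,
        Matrix.conjTranspose_smul, star_trivial, star_trivial, hx2.eq, hy2.eq]
    · rw [Matrix.add_mulVec, Matrix.smul_mulVec, Matrix.smul_mulVec,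
        dotProduct_add, dotProduct_smul, dotProduct_smul,
        Complex.add_re, Complex.smul_re, Complex.smul_re]
      calc a * (star (maxEntangledVec D) ⬝ᵥ (x *ᵥ maxEntangledVec D)).re
            + b * (star (maxEntangledVec D) ⬝ᵥ (y *ᵥ maxEntangledVec D)).re
          ≤ a * (1 / D) + b * (1 / D) :=
            add_le_add (mul_le_mul_of_nonneg_left hx3 ha) (mul_le_mul_of_nonneg_left hy3 hb)
        _ = 1 / D := by rw [← add_mul, hab, one_mul]
  have hsub : {M | ∃ (σ₁ : Matrix (Fin D) (Fin D) ℂ) (σ₂ : Matrix (Fin D) (Fin D) ℂ),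
      IsDensityMatrix σ₁ ∧ IsDensityMatrix σ₂ ∧ M = σ₁ ⊗ₖ σ₂} ⊆ S := by
    rintro M ⟨σ₁, σ₂, h₁, h₂, rfl⟩
    refine ⟨?_, ?_, gen_quadform D hD h₁ h₂⟩
    · rw [Matrix.trace_kronecker, h₁.2, h₂.2, mul_one]
    · rw [Matrix.IsHermitian]
      ext ⟨a, b⟩ ⟨c, d⟩
      rw [Matrix.conjTranspose_apply, Matrix.kronecker_apply, Matrix.kronecker_apply, star_mul']
      rw [show star (σ₂ d b) = σ₂ᴴ b d from rfl, show star (σ₁ c a) = σ₁ᴴ a c from rfl,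
        h₁.1.1.eq, h₂.1.1.eq, mul_comm]
  exact convexHull_min hsub hconv hσ

end Phi

/-- The maximally entangled state `P = φ·φᴴ` is at trace distance at least `1 − 1/D`
from every separable state. -/
theorem traceDist_maxEntangled_separable_ge (D : ℕ) (hD : 1 ≤ D)
    (σ : Matrix (Fin D × Fin D) (Fin D × Fin D) ℂ) (hσ : IsSeparableState σ) :
    (1 / 2) * traceNorm' (Matrix.vecMulVec (maxEntangledVec D) (star (maxEntangledVec D)) - σ)
      ≥ 1 - 1 / D := by
  obtain ⟨htr, hherm, hquad⟩ := sep_mem D hD σ hσ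
  set P := Matrix.vecMulVec (maxEntangledVec D) (star (maxEntangledVec D)) with hP
  set X := P - σ with hX
  have hXh : X.IsHermitian := (P_herm D).sub hherm
  have hXtr : X.trace = 0 := by rw [hX, Matrix.trace_sub, P_trace D hD, htr, sub_self]
  have hq : (star (maxEntangledVec D) ⬝ᵥ (X *ᵥ maxEntangledVec D)).re
      = 1 - (star (maxEntangledVec D) ⬝ᵥ (σ *ᵥ maxEntangledVec D)).re := by
    rw [hX, Matrix.sub_mulVec, dotProduct_sub, Complex.sub_re, P_quadform D hD,
      Complex.one_re]
  have hle := herm_quadform_le hXh (maxEntangledVec D) (maxEnt_norm D hD)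
  rw [hXtr, Complex.zero_re, add_zero, hq] at hle
  linarith
end
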